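/- Let γ ∈ ℝ³ be a probability vector (γ_i ≥ 0, γ₁+γ₂+γ₃ = 1) with γ_i ≤ 2/3 for every i, and suppose there exists an index j with γ_j = 0 or γ_j = 2/3. Then there exist a 3×2 row-stochastic matrix P^A and a 2×3 row-stochastic matrix P^B such that the matrix V = P^A P^B satisfies V(i,i) = 0 for all i and (1/3)·∑_{i=1}^{3} V(i,k) = γ_k for all k. -/

import Mathlib

open Finset

/-- A real matrix is row-stochastic if all entries are nonnegative and each row sums to 1. -/
def RowStochastic {m n : ℕ} (P : Matrix (Fin m) (Fin n) ℝ) : Prop :=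
  (∀ i j, 0 ≤ P i j) ∧ ∀ i, ∑ j, P i j = 1

/-- **Sufficiency.** If `γ` is a probability vector with every `γ_i ≤ 2/3` and some
`γ_j ∈ {0, 2/3}`, then the game `H³(γ)` is perfectly winnable with one classical bit:
there is a 1-bit strategy whose visit matrix `V = PA * PB` has zero diagonal and column
averages `γ`. -/
theorem classical_perfect_win_sufficient
    (γ : Fin 3 → ℝ) (hγ0 : ∀ i, 0 ≤ γ i) (hγ1 : ∑ i, γ i = 1)
    (hγ2 : ∀ i, γ i ≤ 2/3) (hj : ∃ j, γ j = 0 ∨ γ j = 2/3) :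
    ∃ (PA : Matrix (Fin 3) (Fin 2) ℝ) (PB : Matrix (Fin 2) (Fin 3) ℝ),
      RowStochastic PA ∧ RowStochastic PB ∧
      (∀ i, (PA * PB) i i = 0) ∧
      (∀ k, (1/3) * ∑ i, (PA * PB) i k = γ k) := by
  obtain ⟨a, b, c, rfl⟩ : ∃ a b c, γ = ![a, b, c] :=
    ⟨γ 0, γ 1, γ 2, by funext i; fin_cases i <;> rfl⟩
  have h0 := hγ0 0; have h1 := hγ0 1; have h2 := hγ0 2
  have g0 := hγ2 0; have g1 := hγ2 1; have g2 := hγ2 2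
  rw [Fin.sum_univ_three] at hγ1
  norm_num [Matrix.cons_val_two] at h0 h1 h2 g0 g1 g2 hγ1
  obtain ⟨j, hcase⟩ := hj
  fin_cases j <;> rcases hcase with h | h <;> norm_num at h <;>
    [ refine ⟨!![3*b - 1, 2 - 3*b; 0,1; 1,0], !![0,1,0; 0,0,1], ?_⟩;
      refine ⟨!![0,1; 1,0; 1,0], !![1,0,0; 0, 3*b, 3*c], ?_⟩;
      refine ⟨!![0,1; 3*a - 1, 2 - 3*a; 1,0], !![1,0,0; 0,0,1], ?_⟩;
      refine ⟨!![1,0; 0,1; 1,0], !![0,1,0; 3*a, 0, 3*c], ?_⟩;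
      refine ⟨!![0,1; 1,0; 3*a - 1, 2 - 3*a], !![1,0,0; 0,1,0], ?_⟩;
      refine ⟨!![1,0; 1,0; 0,1], !![0,0,1; 3*a, 3*b, 0], ?_⟩ ] <;>
  refine ⟨⟨fun i k => ?_, fun i => ?_⟩, ⟨fun i k => ?_, fun i => ?_⟩, fun i => ?_, fun k => ?_⟩ <;>
  · first
    | (fin_cases i <;> fin_cases k <;>
        norm_num [Matrix.mul_apply, Fin.sum_univ_succ] <;> linarith)
    | (fin_cases i <;>
        norm_num [Matrix.mul_apply, Fin.sum_univ_succ] <;> linarith)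
    | (fin_cases k <;>
        norm_num [Matrix.mul_apply, Fin.sum_univ_succ] <;> linarith)
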